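/- arXiv:0901.0224 — 2 statements merged into one kernel-verified Lean document; each statement's English description precedes it below -/
import Mathlib

section
/- Let d ≥ 3 and define h(u) = C·e^u + (d-2)·u·e^u − 2d·(e^u − 1) for u ≥ 0, with C = d + 2 + (d-2)·log((d-2)/(2d)). Then h(u) ≥ 0 for all u ≥ 0. -/
open Real

theorem stmt_0 (d : ℕ) (hd : 3 ≤ d)
    (C : ℝ) (hC : C = d + 2 + (d - 2) * Real.log ((d - 2) / (2 * d))) :
    ∀ u : ℝ, 0 ≤ u →
      0 ≤ C * Real.exp u + (d - 2) * u * Real.exp u - 2 * d * (Real.exp u - 1) := by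
  intro u hu
  have hd3 : (3:ℝ) ≤ (d:ℝ) := by exact_mod_cast hd
  have ha : (0:ℝ) < (d:ℝ) - 2 := by linarith
  have h2d : (0:ℝ) < 2 * (d:ℝ) := by linarith
  set t : ℝ := ((d:ℝ) - 2) / (2 * d) with ht
  have htpos : 0 < t := div_pos ha h2d
  have hlt : Real.exp (Real.log t) = t := Real.exp_log htpos
  have ht2 : 2 * (d:ℝ) * t = (d:ℝ) - 2 := by
    rw [ht]; field_simp
  have key : t * (1 - u - Real.log t) ≤ Real.exp (-u) := by
    have h1 : (-u - Real.log t) + 1 ≤ Real.exp (-u - Real.log t) :=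
      Real.add_one_le_exp _
    have h2 : t * ((-u - Real.log t) + 1) ≤ t * Real.exp (-u - Real.log t) := by
      nlinarith
    have h3 : t * Real.exp (-u - Real.log t) = Real.exp (-u) := by
      rw [Real.exp_sub, hlt]
      field_simp
    nlinarith
  have hexp : 0 < Real.exp u := Real.exp_pos u
  have hinv : Real.exp (-u) * Real.exp u = 1 := by
    rw [← Real.exp_add]; simp
  have key2 : t * (1 - u - Real.log t) * Real.exp u ≤ 1 := by
    calc t * (1 - u - Real.log t) * Real.exp u
        ≤ Real.exp (-u) * Real.exp u := by
          exact mul_le_mul_of_nonneg_right key hexp.le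
      _ = 1 := hinv
  have key3 : ((d:ℝ) - 2) * (1 - u - Real.log t) * Real.exp u ≤ 2 * d := by
    have := mul_le_mul_of_nonneg_left key2 h2d.le
    nlinarith
  nlinarith [key3, hexp, mul_pos hexp ha]
end

section
/- Let d ≥ 3, f(u) = e^u, F(u) = e^u. Then G := sup_{z∈ℝ} [2d(F(z) − F(μ)) − (d-2) f(z)(z−μ)]/f(z) is independent of μ and equals d + 2 + (d-2) log((d-2)/(2d)); i.e., for all z, μ ∈ ℝ: 2d(e^z − e^μ) − (d-2)e^z(z−μ) ≤ (d + 2 + (d-2)log((d-2)/(2d))) e^z, with equality for some z. -/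
open Real

theorem stmt_18 (d : ℕ) (hd : 3 ≤ d) :
    (∀ z μ : ℝ,
      2 * d * (Real.exp z - Real.exp μ) - ((d : ℝ) - 2) * Real.exp z * (z - μ) ≤
        ((d : ℝ) + 2 + ((d : ℝ) - 2) * Real.log (((d : ℝ) - 2) / (2 * d))) * Real.exp z) ∧
    (∀ μ : ℝ, ∃ z : ℝ,
      2 * d * (Real.exp z - Real.exp μ) - ((d : ℝ) - 2) * Real.exp z * (z - μ) =
        ((d : ℝ) + 2 + ((d : ℝ) - 2) * Real.log (((d : ℝ) - 2) / (2 * d))) * Real.exp z) := by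
  have hd3 : (3 : ℝ) ≤ (d : ℝ) := by exact_mod_cast hd
  set c : ℝ := ((d : ℝ) - 2) / (2 * d) with hc_def
  have hc : 0 < c := by
    apply div_pos <;> nlinarith
  have hcd : 2 * (d : ℝ) * c = (d : ℝ) - 2 := by
    have hd0 : (d : ℝ) ≠ 0 := (by linarith : (0:ℝ) < d).ne'
    rw [hc_def]
    field_simp
  have hlog : Real.exp (Real.log c) = c := Real.exp_log hc
  constructor
  · intro z μ
    have hez : (0 : ℝ) < Real.exp z := Real.exp_pos z
    have h1 : (μ - z - Real.log c) + 1 ≤ Real.exp (μ - z - Real.log c) :=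
      Real.add_one_le_exp _
    have h2 : Real.exp (μ - z - Real.log c) * (c * Real.exp z) = Real.exp μ := by
      rw [← hlog, ← Real.exp_add, ← Real.exp_add]
      congr 1
      simp [Real.log_exp]
      try ring
    have hkey : ((μ - z - Real.log c) + 1) * (c * Real.exp z) ≤ Real.exp μ := by
      rw [← h2]
      exact mul_le_mul_of_nonneg_right h1 (by positivity)
    have hkey2 : ((d : ℝ) - 2) * ((μ - z - Real.log c + 1) * Real.exp z) ≤
        2 * (d : ℝ) * Real.exp μ := by
      calc ((d : ℝ) - 2) * ((μ - z - Real.log c + 1) * Real.exp z)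
          = 2 * (d : ℝ) * ((μ - z - Real.log c + 1) * (c * Real.exp z)) := by
            rw [← hcd]; ring
        _ ≤ 2 * (d : ℝ) * Real.exp μ :=
            mul_le_mul_of_nonneg_left hkey (by positivity)
    nlinarith [hkey2]
  · intro μ
    refine ⟨μ - Real.log c, ?_⟩
    have h2 : Real.exp μ = Real.exp (μ - Real.log c) * c := by
      rw [← hlog, ← Real.exp_add]
      congr 1
      simp [Real.log_exp]
      try ring
    rw [h2]
    linear_combination (-Real.exp (μ - Real.log c)) * hcd
end
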